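/- For each i ∈ {1, …, n₁} and j ∈ {1, …, n₂}, setting θᵢ := 2πι(i + t₁)/n₁, xᵢ := (e^{sθᵢ})_{s=0}^{n₁−1} ∈ ℂ^{n₁}, t̂₂ := t₂ − (m₁/n₁)t₁ + ρ₁t₁, θ_{i,j} := 2πι(j − (m₁/n₁)i + t̂₂)/n₂, and y_{i,j} := (e^{sθ_{i,j}})_{s=0}^{n₂−1} ∈ ℂ^{n₂}, one has K₂ (y_{i,j} ⊗ xᵢ) = δy⁻¹(e^{θ_{i,j}} − 1) · (y_{i,j} ⊗ xᵢ), where ⊗ denotes the Kronecker product. (Theorem 4.2: the complete set of eigenpairs of K₂.) -/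
import Mathlib


open Real Matrix

/-- The `n₁×n₁` block `S(a) = [[0, e^{−2πι t₁} I_a], [I_{n₁−a}, 0]]` with top-right
block of size `a × a` and bottom-left block of size `(n₁−a) × (n₁−a)`. -/
noncomputable def Sblk (n₁ : ℕ) (t₁ : ℝ) (a : ℕ) : Matrix (Fin n₁) (Fin n₁) ℂ :=
  Matrix.of fun s s' =>
    (if (s : ℕ) < a ∧ (s' : ℕ) = (s : ℕ) + (n₁ - a)
      then Complex.exp (-(2 * (π : ℂ) * Complex.I * (t₁ : ℂ))) else 0)
    + (if a ≤ (s : ℕ) ∧ (s' : ℕ) + a = (s : ℕ) then 1 else 0)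

/-- `J₂ = e^{2πι ρ₁ t₁} S(m₁)`. -/
noncomputable def J2 (n₁ : ℕ) (t₁ : ℝ) (ρ₁ m₁ : ℕ) : Matrix (Fin n₁) (Fin n₁) ℂ :=
  Complex.exp (2 * (π : ℂ) * Complex.I * (ρ₁ : ℂ) * (t₁ : ℂ)) • Sblk n₁ t₁ m₁

/-- The Yee discretization `K₂` of `∂y` with quasi-periodic boundary conditions:
`n₂ × n₂` block matrix with `n₁ × n₁` blocks, `(1/δy)` times [`−I` on the block
diagonal, `I` on the block superdiagonal, `e^{2πι t₂} J₂` at block `(n₂−1, 0)`]. -/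
noncomputable def K2 (n₁ n₂ : ℕ) (δy t₁ t₂ : ℝ) (ρ₁ m₁ : ℕ) :
    Matrix (Fin n₂ × Fin n₁) (Fin n₂ × Fin n₁) ℂ :=
  Matrix.of fun p q =>
    (1 / (δy : ℂ)) *
      ((if (q.1 : ℕ) = (p.1 : ℕ) + 1 ∧ q.2 = p.2 then 1 else 0)
        + (if (p.1 : ℕ) = n₂ - 1 ∧ (q.1 : ℕ) = 0
            then Complex.exp (2 * (π : ℂ) * Complex.I * (t₂ : ℂ)) * J2 n₁ t₁ ρ₁ m₁ p.2 q.2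
            else 0)
        - (if p = q then 1 else 0))

private lemma sum_fin_eq_of_lt {n : ℕ} {c : ℕ} (hc : c < n) (f : Fin n → ℂ) :
    (∑ q : Fin n, if (q : ℕ) = c then f q else 0) = f ⟨c, hc⟩ := by
  rw [Finset.sum_eq_single (⟨c, hc⟩ : Fin n)]
  · simp
  · intro q _ hq
    exact if_neg fun h => hq (Fin.ext h)
  · intro h; exact absurd (Finset.mem_univ _) h

/-- Theorem 4.2: the eigenpairs of `K₂` are
`(δy⁻¹(e^{θ_{i,j}} − 1), y_{i,j} ⊗ xᵢ)` with
`θ_{i,j} = 2πι(j − (m₁/n₁)i + t̂₂)/n₂`, `t̂₂ = t₂ − (m₁/n₁)t₁ + ρ₁t₁`. -/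
theorem stmt_6 (n₁ n₂ : ℕ) (hn₁ : 1 ≤ n₁) (hn₂ : 1 ≤ n₂)
    (δy : ℝ) (hδy : 0 < δy) (t₁ t₂ : ℝ)
    (ρ₁ : ℕ) (hρ₁ : ρ₁ ≤ 1) (m₁ : ℕ) (hm₁ : m₁ ≤ n₁)
    (i j : ℕ) (hi : 1 ≤ i) (hin : i ≤ n₁) (hj : 1 ≤ j) (hjn : j ≤ n₂)
    (θi : ℂ) (hθi : θi = 2 * (π : ℂ) * Complex.I * ((i : ℂ) + (t₁ : ℂ)) / (n₁ : ℂ))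
    (x : Fin n₁ → ℂ) (hx : ∀ s : Fin n₁, x s = Complex.exp (((s : ℕ) : ℂ) * θi))
    (t₂hat : ℝ) (ht₂hat : t₂hat = t₂ - (m₁ : ℝ) / n₁ * t₁ + (ρ₁ : ℝ) * t₁)
    (θij : ℂ)
    (hθij : θij = 2 * (π : ℂ) * Complex.I
      * ((((j : ℝ) - (m₁ : ℝ) / n₁ * i + t₂hat : ℝ)) : ℂ) / (n₂ : ℂ))
    (y : Fin n₂ → ℂ) (hy : ∀ s : Fin n₂, y s = Complex.exp (((s : ℕ) : ℂ) * θij)) :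
    (K2 n₁ n₂ δy t₁ t₂ ρ₁ m₁).mulVec (fun p => y p.1 * x p.2)
      = ((1 / (δy : ℂ)) * (Complex.exp θij - 1)) • (fun p => y p.1 * x p.2) := by
  have hn₁0 : (n₁ : ℂ) ≠ 0 := Nat.cast_ne_zero.mpr (by omega)
  have hn₂0 : (n₂ : ℂ) ≠ 0 := Nat.cast_ne_zero.mpr (by omega)
  have h1 : Complex.exp ((n₁ : ℂ) * θi) = Complex.exp (2 * (π : ℂ) * Complex.I * (t₁ : ℂ)) := by
    have e : (n₁ : ℂ) * θi
        = 2 * (π : ℂ) * Complex.I * (t₁ : ℂ) + ((i : ℤ) : ℂ) * (2 * (π : ℂ) * Complex.I) := by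
      rw [hθi]; push_cast; field_simp; ring
    rw [e, Complex.exp_add, Complex.exp_int_mul_two_pi_mul_I, mul_one]
  have hS : ∀ s : Fin n₁,
      (∑ s' : Fin n₁, Sblk n₁ t₁ m₁ s s' * x s') = Complex.exp (-((m₁ : ℂ) * θi)) * x s := by
    intro s
    simp only [Sblk, Matrix.of_apply, add_mul, Finset.sum_add_distrib, ite_mul, zero_mul,
      one_mul]
    by_cases h : (s : ℕ) < m₁
    · have hb : ¬ m₁ ≤ (s : ℕ) := by omega
      have hlt : (s : ℕ) + (n₁ - m₁) < n₁ := by omega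
      simp only [h, true_and, hb, false_and, if_false, Finset.sum_const_zero, add_zero]
      rw [sum_fin_eq_of_lt hlt (fun s' => _ * x s'), hx, hx, ← Complex.exp_add]
      have e : -(2 * (π : ℂ) * Complex.I * (t₁ : ℂ)) + ((((s : ℕ) + (n₁ - m₁) : ℕ)) : ℂ) * θi
          = (-((m₁ : ℂ) * θi) + ((s : ℕ) : ℂ) * θi) + ((i : ℤ) : ℂ) * (2 * (π : ℂ) * Complex.I) := by
        rw [Nat.cast_add, Nat.cast_sub hm₁, hθi]; push_cast; field_simp; ring
      rw [e, Complex.exp_add, Complex.exp_int_mul_two_pi_mul_I, mul_one, Complex.exp_add]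
    · have hb : m₁ ≤ (s : ℕ) := by omega
      have hlt : (s : ℕ) - m₁ < n₁ := by omega
      simp only [h, false_and, if_false, Finset.sum_const_zero, zero_add]
      have hcongr : (∑ s' : Fin n₁, if m₁ ≤ (s : ℕ) ∧ (s' : ℕ) + m₁ = (s : ℕ) then x s' else 0)
          = ∑ s' : Fin n₁, if (s' : ℕ) = (s : ℕ) - m₁ then x s' else 0 :=
        Finset.sum_congr rfl fun s' _ => if_congr (by omega) rfl rfl
      rw [hcongr, sum_fin_eq_of_lt hlt (fun s' => x s'), hx, hx, ← Complex.exp_add]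
      congr 1
      rw [Nat.cast_sub hb]; ring
  have h2 : Complex.exp (2 * (π : ℂ) * Complex.I * (t₂ : ℂ))
        * (Complex.exp (2 * (π : ℂ) * Complex.I * (ρ₁ : ℂ) * (t₁ : ℂ))
          * Complex.exp (-((m₁ : ℂ) * θi)))
      = Complex.exp ((n₂ : ℂ) * θij) := by
    rw [← Complex.exp_add, ← Complex.exp_add]
    have e : (n₂ : ℂ) * θij = 2 * (π : ℂ) * Complex.I * (t₂ : ℂ)
        + (2 * (π : ℂ) * Complex.I * (ρ₁ : ℂ) * (t₁ : ℂ) + -((m₁ : ℂ) * θi))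
        + ((j : ℤ) : ℂ) * (2 * (π : ℂ) * Complex.I) := by
      rw [hθij, ht₂hat, hθi]; push_cast; field_simp; ring
    conv_rhs => rw [e, Complex.exp_add]
    rw [Complex.exp_int_mul_two_pi_mul_I, mul_one]
  funext p
  obtain ⟨p1, p2⟩ := p
  simp only [Matrix.mulVec, dotProduct, K2, Matrix.of_apply, Pi.smul_apply, smul_eq_mul,
    mul_assoc]
  rw [← Finset.mul_sum]
  congr 1
  simp only [sub_mul, add_mul, Finset.sum_sub_distrib, Finset.sum_add_distrib, ite_mul,
    zero_mul, one_mul, Finset.sum_ite_eq, Finset.mem_univ, if_true]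
  by_cases hp : (p1 : ℕ) = n₂ - 1
  · -- corner row
    rw [Finset.sum_eq_zero (fun q _ => if_neg (fun hc => by
        have := q.1.isLt; omega)), zero_add]
    have h0 : (0 : ℕ) < n₂ := by omega
    rw [Fintype.sum_prod_type, Finset.sum_eq_single (⟨0, h0⟩ : Fin n₂)]
    · rw [Finset.sum_congr rfl (fun b _ => if_pos ⟨hp, rfl⟩)]
      have hy0 : y ⟨0, h0⟩ = 1 := by rw [hy]; simp
      simp only [hy0, one_mul, J2, Matrix.smul_apply, smul_eq_mul, mul_assoc]
      rw [← Finset.mul_sum, ← Finset.mul_sum, hS p2]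
      have hfin : Complex.exp θij * y p1
          = Complex.exp (2 * ((π : ℂ) * (Complex.I * (t₂ : ℂ))))
            * (Complex.exp (2 * ((π : ℂ) * (Complex.I * ((ρ₁ : ℂ) * (t₁ : ℂ)))))
              * Complex.exp (-((m₁ : ℂ) * θi))) := by
        rw [show (2 * ((π : ℂ) * (Complex.I * (t₂ : ℂ))))
            = 2 * (π : ℂ) * Complex.I * (t₂ : ℂ) by ring,
          show (2 * ((π : ℂ) * (Complex.I * ((ρ₁ : ℂ) * (t₁ : ℂ)))))
            = 2 * (π : ℂ) * Complex.I * (ρ₁ : ℂ) * (t₁ : ℂ) by ring,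
          h2, hy, ← Complex.exp_add]
        congr 1
        rw [hp, Nat.cast_sub hn₂]
        push_cast; ring
      linear_combination (-(x p2)) * hfin
    · intro a _ ha
      exact Finset.sum_eq_zero fun b _ => if_neg fun hc => ha (Fin.ext hc.2)
    · intro hmem; exact absurd (Finset.mem_univ _) hmem
  · -- interior row
    have hp1 : (p1 : ℕ) + 1 < n₂ := by have := p1.isLt; omega
    simp only [hp, false_and, if_false, Finset.sum_const_zero, add_zero]
    rw [Finset.sum_eq_single ((⟨(p1 : ℕ) + 1, hp1⟩ : Fin n₂), p2)]
    · rw [if_pos ⟨rfl, rfl⟩]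
      have hysucc : y (⟨(p1 : ℕ) + 1, hp1⟩ : Fin n₂) = Complex.exp θij * y p1 := by
        rw [hy, hy, ← Complex.exp_add]
        congr 1
        push_cast; ring
      linear_combination (x p2) * hysucc
    · intro q _ hq
      exact if_neg fun hc => hq (Prod.ext (Fin.ext hc.1) hc.2)
    · intro hmem; exact absurd (Finset.mem_univ _) hmem
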